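/- Let j, k, g, r be positive integers with g = gcd(j, j+k), and suppose j and j+k have the same set of prime factors. If p = jr/g + 1 and q = (j+k)r/g + 1 are both primes not dividing j, and n = j·((j+k)r/g + 1), then φ(n) = φ(n+k). -/
import Mathlib

theorem stmt_2 (j k g r n : ℕ) (hj : 0 < j) (hk : 0 < k) (hr : 0 < r)
    (hg : g = Nat.gcd j (j + k))
    (hsame : j.primeFactors = (j + k).primeFactors)
    (hp : Nat.Prime (j * r / g + 1)) (hq : Nat.Prime ((j + k) * r / g + 1))
    (hpj : ¬ (j * r / g + 1) ∣ j) (hqj : ¬ ((j + k) * r / g + 1) ∣ j)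
    (hn : n = j * ((j + k) * r / g + 1)) :
    Nat.totient n = Nat.totient (n + k) := by
  have hgj : g ∣ j := hg ▸ Nat.gcd_dvd_left _ _
  have hgjk : g ∣ j + k := hg ▸ Nat.gcd_dvd_right _ _
  obtain ⟨a, ha⟩ := hgj
  obtain ⟨b, hb⟩ := hgjk
  have hg0 : 0 < g := by
    rw [hg]; exact Nat.gcd_pos_of_pos_left _ hj
  have hjr : j * r / g = a * r := by
    rw [ha, mul_assoc, Nat.mul_div_cancel_left _ hg0]
  have hjkr : (j + k) * r / g = b * r := by
    rw [hb, mul_assoc, Nat.mul_div_cancel_left _ hg0]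
  set p := j * r / g + 1 with hpdef
  set q := (j + k) * r / g + 1 with hqdef
  -- n + k = (j+k) * p
  have hab : j * b = (j + k) * a := by rw [hb, ha]; ring
  have hkey : j * q + k = (j + k) * p := by
    rw [hqdef, hpdef, hjkr, hjr]
    calc j * (b * r + 1) + k = (j * b) * r + (j + k) := by ring
      _ = ((j + k) * a) * r + (j + k) := by rw [hab]
      _ = (j + k) * (a * r + 1) := by ring
  -- p does not divide j + k
  have hpjk : ¬ p ∣ (j + k) := by
    intro hd
    apply hpj
    have hmem : p ∈ (j + k).primeFactors :=
      Nat.mem_primeFactors.2 ⟨hp, hd, by omega⟩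
    rw [← hsame] at hmem
    exact (Nat.mem_primeFactors.1 hmem).2.1
  have hcop1 : Nat.Coprime j q := ((Nat.Prime.coprime_iff_not_dvd hq).2 hqj).symm
  have hcop2 : Nat.Coprime (j + k) p := ((Nat.Prime.coprime_iff_not_dvd hp).2 hpjk).symm
  have e1 : Nat.totient n = Nat.totient j * (b * r) := by
    rw [hn, Nat.totient_mul hcop1, Nat.totient_prime hq, hqdef, hjkr]
    simp
  have e2 : Nat.totient (n + k) = Nat.totient (j + k) * (a * r) := by
    rw [hn, hkey, Nat.totient_mul hcop2, Nat.totient_prime hp, hpdef, hjr]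
    simp
  rw [e1, e2]
  -- now show φ j * b = φ (j+k) * a using the product formula
  have h1 := Nat.totient_mul_prod_primeFactors j
  have h2 := Nat.totient_mul_prod_primeFactors (j + k)
  rw [← hsame] at h2
  set P := ∏ p ∈ j.primeFactors, p with hP
  set Q := ∏ p ∈ j.primeFactors, (p - 1) with hQ
  have hP0 : 0 < P := Finset.prod_pos fun p hp => (Nat.prime_of_mem_primeFactors hp).pos
  have key : Nat.totient j * b = Nat.totient (j + k) * a := by
    have c1 : Nat.totient j * b * P = Nat.totient (j + k) * a * P := by
      calc Nat.totient j * b * P = (Nat.totient j * P) * b := by ring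
        _ = j * Q * b := by rw [h1]
        _ = (g * b) * a * Q := by rw [ha]; ring
        _ = (j + k) * Q * a := by rw [hb]; ring
        _ = (Nat.totient (j + k) * P) * a := by rw [h2]
        _ = Nat.totient (j + k) * a * P := by ring
    exact Nat.eq_of_mul_eq_mul_right hP0 c1
  calc Nat.totient j * (b * r) = (Nat.totient j * b) * r := by ring
    _ = (Nat.totient (j + k) * a) * r := by rw [key]
    _ = Nat.totient (j + k) * (a * r) := by ring
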